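/- Let G be a graph with feedback vertex set M, let X ⊆ M with |X| ≥ 1, and let 𝒯 be a family of at least |X| + 2 pairwise disjoint, pairwise non-adjacent connected vertex subsets of V(G) − M, each a union of connected components of G − M, such that N(T) ∩ M = X for all T ∈ 𝒯. Then there is T ∈ 𝒯 such that G and G − T have the same minimum feedback vertex set size. -/

import Mathlib

open SimpleGraph Finset
open scoped Classical

section Helpers
variable {V : Type*} {G : SimpleGraph V}



/-- Lift a walk in `G` whose support lies in `B` to a walk in `G.induce B`. -/
def liftW {B : Set V} : ∀ {u v : V} (p : G.Walk u v) (hp : ∀ s ∈ p.support, s ∈ B),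
    (G.induce B).Walk ⟨u, hp u p.start_mem_support⟩ ⟨v, hp v p.end_mem_support⟩
  | _, _, SimpleGraph.Walk.nil, _ => SimpleGraph.Walk.nil
  | _, _, SimpleGraph.Walk.cons h p, hp =>
      SimpleGraph.Walk.cons (by exact h)
        (liftW p (fun s hs => hp s (by simp [hs])))

lemma liftW_map {B : Set V} : ∀ {u v : V} (p : G.Walk u v) (hp : ∀ s ∈ p.support, s ∈ B),
    (liftW p hp).map (SimpleGraph.Embedding.induce B).toHom = p
  | _, _, SimpleGraph.Walk.nil, _ => rfl
  | _, _, SimpleGraph.Walk.cons h p, hp => by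
      simp only [liftW, SimpleGraph.Walk.map_cons]
      exact congrArg (SimpleGraph.Walk.cons _) (liftW_map p _)

lemma cycle_transfer {A B : Set V} {a : A} (c : (G.induce A).Walk a a) (hc : c.IsCycle)
    (hsup : ∀ s ∈ c.support, (s : V) ∈ B) (hB : (G.induce B).IsAcyclic) : False := by
  have hinj : Function.Injective (SimpleGraph.Embedding.induce (G := G) A).toHom :=
    Subtype.val_injective
  set p : G.Walk (a : V) (a : V) := c.map (SimpleGraph.Embedding.induce A).toHom with hp
  have hpc : p.IsCycle := hc.map hinj
  have hpsup : ∀ s ∈ p.support, s ∈ B := by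
    intro s hs
    have hsm := SimpleGraph.Walk.support_map (SimpleGraph.Embedding.induce A).toHom c
    obtain ⟨t, ht, rfl⟩ := List.mem_map.mp (hsm ▸ hs)
    exact hsup t ht
  have : (liftW p hpsup).IsCycle := by
    rw [← SimpleGraph.Walk.map_isCycle_iff_of_injective
      (p := liftW p hpsup) (f := (SimpleGraph.Embedding.induce B).toHom) Subtype.val_injective]
    rw [liftW_map]
    exact hpc
  exact hB _ this

lemma acyc_mono {A B : Set V} (hAB : A ⊆ B) (hB : (G.induce B).IsAcyclic) :
    (G.induce A).IsAcyclic := by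
  intro a c hc
  exact cycle_transfer c hc (fun s _ => hAB s.2) hB

lemma confine1 {A : Set V} {Tset : Finset V} {x : V}
    (H : ∀ y z : V, y ∈ Tset → z ∈ A → G.Adj y z → z ∈ Tset ∨ z = x) :
    ∀ {a b : A} (p : (G.induce A).Walk a b), (a : V) ∈ Tset →
      (∀ s ∈ p.support, (s : V) ≠ x) → ∀ s ∈ p.support, (s : V) ∈ Tset := by
  intro a b p
  induction p with
  | nil => intro ha _ s hs; simp at hs; subst hs; exact ha
  | @cons a z b h p ih =>
    intro ha hnox s hs
    have hz : (z : V) ∈ Tset := by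
      have := H a z ha z.2 h
      rcases this with h1 | h1
      · exact h1
      · exact absurd h1 (hnox z (by simp))
    rcases List.mem_cons.mp (by simpa using hs) with rfl | hs'
    · exact ha
    · exact ih hz (fun t ht => hnox t (by simp [ht])) s hs'

lemma confine2 {A : Set V} {Tset : Finset V} {x : V}
    (H : ∀ y z : V, y ∈ Tset → z ∈ A → G.Adj y z → z ∈ Tset ∨ z = x) :
    ∀ {a b : A} (p : (G.induce A).Walk a b), p.IsPath → (a : V) ∈ Tset → (b : V) = x →
      ∀ s ∈ p.support, (s : V) ∈ Tset ∨ (s : V) = x := by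
  intro a b p
  induction p with
  | nil => intro _ ha _ s hs; simp at hs; subst hs; exact Or.inl ha
  | @cons a z b h p ih =>
    intro hp ha hb s hs
    rcases List.mem_cons.mp (by simpa using hs) with rfl | hs'
    · exact Or.inl ha
    · rcases H a z ha z.2 h with hz | hz
      · exact ih hp.of_cons hz hb s hs'
      · -- z = x, so z = b and p is nil
        have hzb : z = b := Subtype.ext (hz.trans hb.symm)
        subst hzb
        have : p = SimpleGraph.Walk.nil := (SimpleGraph.Walk.isPath_iff_eq_nil (p := p)).mp hp.of_cons
        subst this
        simp at hs'
        subst hs'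
        exact Or.inr hz

lemma pathIn {A : Set V} (T' : Finset V) (hT'A : (T' : Set V) ⊆ A)
    (hconn' : (G.induce (T' : Set V)).Connected) {u w : V} (hu : u ∈ T') (hw : w ∈ T') :
    ∃ P : (G.induce A).Path ⟨u, hT'A hu⟩ ⟨w, hT'A hw⟩,
      ∀ s ∈ P.1.support, (s : V) ∈ T' := by
  obtain ⟨p0⟩ := hconn'.preconnected ⟨u, hu⟩ ⟨w, hw⟩
  let p1 : (G.induce A).Walk ⟨u, hT'A hu⟩ ⟨w, hT'A hw⟩ :=
    p0.map (G.induceHomOfLE hT'A).toHom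
  have hsup1 : ∀ s ∈ p1.support, (s : V) ∈ T' := by
    intro s hs
    have hsm := SimpleGraph.Walk.support_map (G.induceHomOfLE hT'A).toHom p0
    obtain ⟨t, _, rfl⟩ := List.mem_map.mp (hsm ▸ hs)
    exact t.2
  exact ⟨p1.toPath, fun s hs => hsup1 s (p1.support_toPath_subset hs)⟩

lemma induce_adj' {A : Set V} {a b : A} (h : G.Adj a b) : (G.induce A).Adj a b := by
  exact h

/-- Build a path from `x` to `y` through connected `T'`. -/
lemma pathVia {A : Set V} (T' : Finset V) (hT'A : (T' : Set V) ⊆ A)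
    (hconn' : (G.induce (T' : Set V)).Connected) {x y u w : V}
    (hxA : x ∈ A) (hyA : y ∈ A) (hxy : x ≠ y) (hxT : x ∉ T') (hyT : y ∉ T')
    (hu : u ∈ T') (hw : w ∈ T') (axu : G.Adj x u) (awy : G.Adj w y) :
    ∃ P : (G.induce A).Path ⟨x, hxA⟩ ⟨y, hyA⟩,
      (∀ s ∈ P.1.support, (s : V) ∈ T' ∨ (s : V) = x ∨ (s : V) = y) ∧
      (∃ s ∈ P.1.support, (s : V) ∈ T') := by
  obtain ⟨P0, hP0⟩ := pathIn (G := G) T' hT'A hconn' hu hw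
  have hyP0 : (⟨y, hyA⟩ : A) ∉ P0.1.support := fun h => hyT (hP0 _ h)
  have q1 : (G.induce A).Walk ⟨u, hT'A hu⟩ ⟨y, hyA⟩ := P0.1.concat (induce_adj' awy)
  set q : (G.induce A).Walk ⟨u, hT'A hu⟩ ⟨y, hyA⟩ := P0.1.concat (induce_adj' awy) with hq
  have hqsup : q.support = P0.1.support ++ [⟨y, hyA⟩] := by
    rw [hq, SimpleGraph.Walk.support_concat]
  have hqpath : q.IsPath := by
    rw [SimpleGraph.Walk.isPath_def, hqsup]
    refine List.Nodup.append P0.2.2 (List.nodup_singleton _) ?_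
    intro t ht ht'
    simp at ht'
    subst ht'
    exact hyP0 ht
  have hxq : (⟨x, hxA⟩ : A) ∉ q.support := by
    rw [hqsup]
    intro h
    rcases List.mem_append.mp h with h | h
    · exact hxT (hP0 _ h)
    · simp at h; exact hxy (by rw [h])
  refine ⟨⟨SimpleGraph.Walk.cons (induce_adj' axu) q, hqpath.cons hxq⟩, ?_, ?_⟩
  · intro s hs
    rcases List.mem_cons.mp (by simpa using hs) with rfl | hs'
    · exact Or.inr (Or.inl rfl)
    · rw [hqsup] at hs'
      rcases List.mem_append.mp hs' with h | h
      · exact Or.inl (hP0 _ h)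
      · simp at h; subst h; exact Or.inr (Or.inr rfl)
  · refine ⟨⟨u, hT'A hu⟩, ?_, hu⟩
    simp [hqsup]

/-- Two disjoint connected gadgets both linking `x` to `y` contradict acyclicity. -/
lemma twoPaths {A : Set V} (hA : (G.induce A).IsAcyclic) (T₁ T₂ : Finset V)
    (h12 : Disjoint T₁ T₂) (h1A : (T₁ : Set V) ⊆ A) (h2A : (T₂ : Set V) ⊆ A)
    (hc1 : (G.induce (T₁ : Set V)).Connected) (hc2 : (G.induce (T₂ : Set V)).Connected)
    {x y u₁ w₁ u₂ w₂ : V} (hxA : x ∈ A) (hyA : y ∈ A) (hxy : x ≠ y)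
    (hx1 : x ∉ T₁) (hx2 : x ∉ T₂) (hy1 : y ∉ T₁) (hy2 : y ∉ T₂)
    (hu₁ : u₁ ∈ T₁) (hw₁ : w₁ ∈ T₁) (hu₂ : u₂ ∈ T₂) (hw₂ : w₂ ∈ T₂)
    (a1 : G.Adj x u₁) (a2 : G.Adj w₁ y) (a3 : G.Adj x u₂) (a4 : G.Adj w₂ y) : False := by
  obtain ⟨P₁, hP₁sup, s₁, hs₁, hs₁T⟩ := pathVia (G := G) T₁ h1A hc1 hxA hyA hxy hx1 hy1 hu₁ hw₁ a1 a2
  obtain ⟨P₂, hP₂sup, _⟩ := pathVia (G := G) T₂ h2A hc2 hxA hyA hxy hx2 hy2 hu₂ hw₂ a3 a4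
  have := hA.path_unique P₁ P₂
  subst this
  rcases hP₂sup s₁ hs₁ with h | h | h
  · exact Finset.disjoint_left.mp h12 hs₁T h
  · exact hx1 (h ▸ hs₁T)
  · exact hy1 (h ▸ hs₁T)

/-- A vertex `x` with two distinct neighbours in a connected `T' ⊆ A` contradicts acyclicity. -/
lemma twoEdges {A : Set V} (hA : (G.induce A).IsAcyclic) (T' : Finset V)
    (hT'A : (T' : Set V) ⊆ A) (hc : (G.induce (T' : Set V)).Connected)
    {x u v : V} (hxA : x ∈ A) (hxT : x ∉ T') (hu : u ∈ T') (hv : v ∈ T') (huv : u ≠ v)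
    (a1 : G.Adj x u) (a2 : G.Adj x v) : False := by
  obtain ⟨P0, hP0⟩ := pathIn (G := G) T' hT'A hc hu hv
  have hx1 : (G.induce A).Adj ⟨u, hT'A hu⟩ ⟨x, hxA⟩ := induce_adj' a1.symm
  have hx2 : (G.induce A).Adj ⟨x, hxA⟩ ⟨v, hT'A hv⟩ := induce_adj' a2
  have hpath : (SimpleGraph.Walk.cons hx1 (SimpleGraph.Walk.cons hx2 SimpleGraph.Walk.nil)).IsPath := by
    rw [SimpleGraph.Walk.isPath_def]
    simp [Subtype.ext_iff]
    refine ⟨⟨?_, ?_⟩, ?_⟩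
    · intro h; exact hxT (h ▸ hu)
    · exact huv
    · intro h; exact hxT (h.symm ▸ hv)
  have := hA.path_unique ⟨_, hpath⟩ P0
  have hxmem : (⟨x, hxA⟩ : A) ∈ P0.1.support := by
    rw [← this]
    simp
  exact hxT (hP0 _ hxmem)

/-- Around a cycle through `Tset`, all vertices lie in `Tset ∪ {x}`. -/
lemma cycleConfine {A : Set V} {Tset : Finset V} {x : V} (hxT : x ∉ Tset)
    (H : ∀ y z : V, y ∈ Tset → z ∈ A → G.Adj y z → z ∈ Tset ∨ z = x)
    {a : A} (c : (G.induce A).Walk a a) (hc : c.IsCycle) (ha : (a : V) ∈ Tset) :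
    ∀ s ∈ c.support, (s : V) ∈ Tset ∨ (s : V) = x := by
  by_cases hx : ∃ sx ∈ c.support, (sx : V) = x
  · obtain ⟨sx, hsx, hsxval⟩ := hx
    have hsxa : sx ≠ a := by
      intro h; subst h; exact hxT (hsxval ▸ ha)
    have hspec := c.take_spec hsx
    set q₁ := c.takeUntil sx hsx with hq₁
    set q₂ := c.dropUntil sx hsx with hq₂
    have hsupc : c.support = q₁.support ++ q₂.support.tail := by
      conv_lhs => rw [← hspec]
      exact SimpleGraph.Walk.support_append _ _
    have h1 : c.support.tail = q₁.support.tail ++ q₂.support.tail := by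
      have h2 := hsupc
      rw [SimpleGraph.Walk.support_eq_cons q₁] at h2
      rw [SimpleGraph.Walk.support_eq_cons c] at h2
      exact (List.cons.inj h2).2
    have hnd := hc.support_nodup
    rw [h1] at hnd
    obtain ⟨hnd₁, hnd₂, hdisj12⟩ := List.nodup_append.mp hnd
    have haq₂ : a ∈ q₂.support.tail := by
      have := q₂.end_mem_support
      rw [SimpleGraph.Walk.support_eq_cons q₂] at this
      rcases List.mem_cons.mp this with h | h
      · exact absurd h.symm hsxa
      · exact h
    have hsxq₁ : sx ∈ q₁.support.tail := by
      have := q₁.end_mem_support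
      rw [SimpleGraph.Walk.support_eq_cons q₁] at this
      rcases List.mem_cons.mp this with h | h
      · exact absurd h hsxa
      · exact h
    have hq₁path : q₁.IsPath := by
      rw [SimpleGraph.Walk.isPath_def, SimpleGraph.Walk.support_eq_cons q₁]
      exact List.Nodup.cons (fun h => hdisj12 _ h _ haq₂ rfl) hnd₁
    have hq₂path : q₂.IsPath := by
      rw [SimpleGraph.Walk.isPath_def, SimpleGraph.Walk.support_eq_cons q₂]
      exact List.Nodup.cons (fun h => hdisj12 _ hsxq₁ _ h rfl) hnd₂
    intro s hs
    rw [hsupc] at hs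
    rcases List.mem_append.mp hs with h | h
    · exact confine2 H q₁ hq₁path ha hsxval s h
    · have hs' : s ∈ q₂.reverse.support := by
        rw [SimpleGraph.Walk.support_reverse]
        exact List.mem_reverse.mpr (List.mem_of_mem_tail h)
      exact confine2 H q₂.reverse hq₂path.reverse ha hsxval s hs'
  · push_neg at hx
    exact fun s hs => Or.inl (confine1 H c ha hx s hs)

variable [DecidableEq V] [DecidableRel G.Adj]

lemma fvs_of_superset (M X : Finset V) (𝒯 : Finset (Finset V))
    (hM : (G.induce ((M : Set V))ᶜ).IsAcyclic)
    (hXM : X ⊆ M)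
    (hTM : ∀ T ∈ 𝒯, Disjoint T M)
    (hconn : ∀ T ∈ 𝒯, (G.induce (T : Set V)).Connected)
    (hclosed : ∀ T ∈ 𝒯, ∀ v ∈ T, ∀ w : V, G.Adj v w → w ∈ M ∨ w ∈ T)
    (hnbhd : ∀ T ∈ 𝒯, M.filter (fun x => ∃ v ∈ T, G.Adj x v) = X)
    {x0 : V} (hx0 : x0 ∈ X)
    (W : Finset V) (hXW : X ⊆ W)
    (hac : (G.induce ((W : Set V) ∪ {v | ∃ T' ∈ 𝒯, v ∈ T'})ᶜ).IsAcyclic) :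
    (G.induce ((W : Set V))ᶜ).IsAcyclic := by
  intro a c hc
  by_cases hmeet : ∃ s ∈ c.support, ∃ T' ∈ 𝒯, (s : V) ∈ T'
  · obtain ⟨s, hs, T', hT', hsT'⟩ := hmeet
    have hc' := hc.rotate hs
    set c' := c.rotate _ hs with hc'def
    have H : ∀ y z : V, y ∈ T' → z ∈ ((W : Set V))ᶜ → G.Adj y z → z ∈ T' ∨ z = x0 := by
      intro y z hy hz hadj
      rcases hclosed T' hT' y hy z hadj with hzM | hzT
      · exfalso
        have : z ∈ X := by
          rw [← hnbhd T' hT']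
          exact Finset.mem_filter.mpr ⟨hzM, y, hy, hadj.symm⟩
        exact hz (hXW this)
      · exact Or.inl hzT
    have hnox : ∀ t ∈ c'.support, (t : V) ≠ x0 := by
      intro t _ h
      exact t.2 (hXW (h ▸ hx0))
    have hsub := confine1 H c' hsT' hnox
    refine cycle_transfer c' hc' (fun t ht => ?_) hM
    have : (t : V) ∈ T' := hsub t ht
    exact Finset.disjoint_left.mp (hTM T' hT') this
  · push_neg at hmeet
    refine cycle_transfer c hc (fun t ht => ?_) hac
    intro hmem
    rcases hmem with h | h
    · exact t.2 h
    · obtain ⟨T', hT', htT'⟩ := h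
      exact hmeet t ht T' hT' htT'

lemma key (M X : Finset V) (𝒯 : Finset (Finset V))
    (hM : (G.induce ((M : Set V))ᶜ).IsAcyclic)
    (hXM : X ⊆ M) (hX1 : 1 ≤ X.card)
    (hcard : X.card + 2 ≤ 𝒯.card)
    (hTM : ∀ T ∈ 𝒯, Disjoint T M)
    (hconn : ∀ T ∈ 𝒯, (G.induce (T : Set V)).Connected)
    (hclosed : ∀ T ∈ 𝒯, ∀ v ∈ T, ∀ w : V, G.Adj v w → w ∈ M ∨ w ∈ T)
    (hdisj : ∀ T ∈ 𝒯, ∀ T' ∈ 𝒯, T ≠ T' → Disjoint T T')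
    (hnbhd : ∀ T ∈ 𝒯, M.filter (fun x => ∃ v ∈ T, G.Adj x v) = X)
    (f : ℕ)
    (hf_le : ∀ W : Finset V, (G.induce ((W : Set V))ᶜ).IsAcyclic → f ≤ W.card)
    (T : Finset V) (hT : T ∈ 𝒯)
    (S : Finset V) (hST : (S : Set V) ⊆ ((T : Set V))ᶜ)
    (hacyc : (G.induce (((T : Set V))ᶜ \ (S : Set V))).IsAcyclic)
    (hlt : S.card < f) :
    ∃ x ∈ X, X \ S = {x} ∧ ∀ T' ∈ 𝒯, ∀ v ∈ T', v ∉ S := by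
  obtain ⟨x0, hx0⟩ := Finset.card_pos.mp hX1
  set Sin := S.filter (fun v => ∃ T' ∈ 𝒯, v ∈ T') with hSin_def
  set Sout := S.filter (fun v => ¬∃ T' ∈ 𝒯, v ∈ T') with hSout_def
  set W := X ∪ Sout with hW_def
  have hXnotU : ∀ x ∈ X, ∀ T' ∈ 𝒯, x ∉ T' := by
    intro x hx T' hT' hxT'
    exact Finset.disjoint_left.mp (hTM T' hT') hxT' (hXM hx)
  have hWsub : W ⊆ (X \ S) ∪ Sout := by
    intro v hv
    rcases Finset.mem_union.mp hv with hvX | hvS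
    · by_cases hvS' : v ∈ S
      · refine Finset.mem_union_right _ (Finset.mem_filter.mpr ⟨hvS', ?_⟩)
        rintro ⟨T', hT', hvT'⟩
        exact hXnotU v hvX T' hT' hvT'
      · exact Finset.mem_union_left _ (Finset.mem_sdiff.mpr ⟨hvX, hvS'⟩)
    · exact Finset.mem_union_right _ hvS
  have hsplit : Sin.card + Sout.card = S.card := Finset.card_filter_add_card_filter_not _
  have hcardW : W.card ≤ (X \ S).card + Sout.card :=
    le_trans (Finset.card_le_card hWsub) (Finset.card_union_le _ _)
  -- if (X\S).card ≤ Sin.card we derive a contradiction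
  have hWgood : (X \ S).card ≤ Sin.card → False := by
    intro hk
    have hacW : (G.induce ((W : Set V))ᶜ).IsAcyclic := by
      refine fvs_of_superset M X 𝒯 hM hXM hTM hconn hclosed hnbhd hx0 W
        Finset.subset_union_left (acyc_mono ?_ hacyc)
      intro v hv
      simp only [Set.mem_compl_iff, Set.mem_union, not_or] at hv
      obtain ⟨hvW, hvU⟩ := hv
      constructor
      · intro hvT
        exact hvU ⟨T, hT, hvT⟩
      · intro hvS
        by_cases h' : ∃ T' ∈ 𝒯, v ∈ T'
        · exact hvU h'
        · exact hvW (Finset.mem_coe.mpr (Finset.mem_union_right _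
            (Finset.mem_filter.mpr ⟨hvS, h'⟩)))
    have := hf_le W hacW
    omega
  rcases Nat.lt_or_ge (X \ S).card 2 with hk2 | hk2
  · -- k = 0 or 1
    rcases Nat.eq_zero_or_pos (X \ S).card with hk0 | hk1
    · exact absurd (hk0 ▸ Nat.zero_le _) (fun h => hWgood h)
    · -- k = 1
      by_cases hSinne : Sin.Nonempty
      · have hpos := Finset.card_pos.mpr hSinne
        exact (hWgood (by omega)).elim
      · -- Sin empty : the bad case, produce output
        have hk1' : (X \ S).card = 1 := by omega
        obtain ⟨x, hx⟩ := Finset.card_eq_one.mp hk1'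
        refine ⟨x, ?_, hx, ?_⟩
        · have : x ∈ X \ S := hx ▸ Finset.mem_singleton_self x
          exact (Finset.mem_sdiff.mp this).1
        · intro T' hT' v hvT' hvS
          exact hSinne ⟨v, Finset.mem_filter.mpr ⟨hvS, T', hT', hvT'⟩⟩
  · -- k ≥ 2 : count hit members
    exfalso
    obtain ⟨x, hxXS, y, hyXS, hxy⟩ := Finset.one_lt_card.mp (by omega : 1 < (X \ S).card)
    set Hit := (𝒯.erase T).filter (fun T' => (S ∩ T').Nonempty) with hHit_def
    set Free := (𝒯.erase T).filter (fun T' => ¬(S ∩ T').Nonempty) with hFree_def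
    -- any member other than T that is free lies inside the acyclic region
    have hsubA : ∀ T' ∈ Free, (T' : Set V) ⊆ ((T : Set V))ᶜ \ (S : Set V) := by
      intro T' hT' v hvT'
      obtain ⟨hT'mem, hT'free⟩ := Finset.mem_filter.mp hT'
      obtain ⟨hT'ne, hT'𝒯⟩ := Finset.mem_erase.mp hT'mem
      constructor
      · exact fun hvT => Finset.disjoint_left.mp (hdisj T' hT'𝒯 T hT hT'ne) hvT' hvT
      · exact fun hvS => hT'free ⟨v, Finset.mem_inter.mpr ⟨hvS, hvT'⟩⟩
    have hfree1 : Free.card ≤ 1 := by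
      refine Finset.card_le_one.mpr fun T₁' h₁ T₂' h₂ => ?_
      by_contra hne
      obtain ⟨hxX, hxS⟩ := Finset.mem_sdiff.mp hxXS
      obtain ⟨hyX, hyS⟩ := Finset.mem_sdiff.mp hyXS
      have h𝒯₁ := (Finset.mem_erase.mp (Finset.mem_filter.mp h₁).1).2
      have h𝒯₂ := (Finset.mem_erase.mp (Finset.mem_filter.mp h₂).1).2
      have hnbr : ∀ z ∈ X, ∀ T'' ∈ 𝒯, ∃ u ∈ T'', G.Adj z u := by
        intro z hz T'' hT''
        have : z ∈ M.filter (fun x => ∃ v ∈ T'', G.Adj x v) := (hnbhd T'' hT'').symm ▸ hz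
        exact (Finset.mem_filter.mp this).2
      obtain ⟨u₁, hu₁, a1⟩ := hnbr x hxX T₁' h𝒯₁
      obtain ⟨w₁, hw₁, a2⟩ := hnbr y hyX T₁' h𝒯₁
      obtain ⟨u₂, hu₂, a3⟩ := hnbr x hxX T₂' h𝒯₂
      obtain ⟨w₂, hw₂, a4⟩ := hnbr y hyX T₂' h𝒯₂
      have hxA : x ∈ ((T : Set V))ᶜ \ (S : Set V) :=
        ⟨fun h => hXnotU x hxX T hT h, hxS⟩
      have hyA : y ∈ ((T : Set V))ᶜ \ (S : Set V) :=
        ⟨fun h => hXnotU y hyX T hT h, hyS⟩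
      exact twoPaths hacyc T₁' T₂' (hdisj T₁' h𝒯₁ T₂' h𝒯₂ hne) (hsubA T₁' h₁) (hsubA T₂' h₂)
        (hconn T₁' h𝒯₁) (hconn T₂' h𝒯₂) hxA hyA hxy
        (hXnotU x hxX T₁' h𝒯₁) (hXnotU x hxX T₂' h𝒯₂)
        (hXnotU y hyX T₁' h𝒯₁) (hXnotU y hyX T₂' h𝒯₂)
        hu₁ hw₁ hu₂ hw₂ a1 a2.symm a3 a4.symm
    have hHitFree : Hit.card + Free.card = 𝒯.card - 1 := by
      have h1 : Hit.card + Free.card = (𝒯.erase T).card :=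
        Finset.card_filter_add_card_filter_not _
      rw [h1, Finset.card_erase_of_mem hT]
    have hHitSin : Hit.card ≤ Sin.card := by
      refine Finset.card_le_card_of_injOn
        (fun T' => if h : (S ∩ T').Nonempty then h.choose else x0) ?_ ?_
      · intro T' hT'
        obtain ⟨hT'mem, hT'hit⟩ := Finset.mem_filter.mp hT'
        simp only [dif_pos hT'hit]
        obtain ⟨hv1, hv2⟩ := Finset.mem_inter.mp hT'hit.choose_spec
        exact Finset.mem_filter.mpr ⟨hv1, T', (Finset.mem_erase.mp hT'mem).2, hv2⟩
      · intro T₁' h₁ T₂' h₂ heq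
        obtain ⟨hm₁, hh₁⟩ := Finset.mem_filter.mp (Finset.mem_coe.mp h₁)
        obtain ⟨hm₂, hh₂⟩ := Finset.mem_filter.mp (Finset.mem_coe.mp h₂)
        simp only [dif_pos hh₁, dif_pos hh₂] at heq
        by_contra hne
        have hv₁ := Finset.mem_inter.mp hh₁.choose_spec
        have hv₂ := Finset.mem_inter.mp hh₂.choose_spec
        exact Finset.disjoint_left.mp
          (hdisj T₁' (Finset.mem_erase.mp hm₁).2 T₂' (Finset.mem_erase.mp hm₂).2 hne)
          hv₁.2 (heq ▸ hv₂.2)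
    have hXcard : (X \ S).card ≤ X.card := Finset.card_le_card (Finset.sdiff_subset)
    exact hWgood (by omega)

lemma final (M X : Finset V) (𝒯 : Finset (Finset V))
    (hM : (G.induce ((M : Set V))ᶜ).IsAcyclic)
    (hXM : X ⊆ M)
    (hTM : ∀ T ∈ 𝒯, Disjoint T M)
    (hclosed : ∀ T ∈ 𝒯, ∀ v ∈ T, ∀ w : V, G.Adj v w → w ∈ M ∨ w ∈ T)
    (hdisj : ∀ T ∈ 𝒯, ∀ T' ∈ 𝒯, T ≠ T' → Disjoint T T')
    (hnbhd : ∀ T ∈ 𝒯, M.filter (fun x => ∃ v ∈ T, G.Adj x v) = X)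
    (T₁ : Finset V) (hT₁ : T₁ ∈ 𝒯) (T₂ : Finset V) (hT₂ : T₂ ∈ 𝒯) (hne : T₁ ≠ T₂)
    {x : V} (hxX : x ∈ X)
    (S₁ : Finset V) (hacyc₁ : (G.induce (((T₁ : Set V))ᶜ \ (S₁ : Set V))).IsAcyclic)
    (hXS₁ : X \ S₁ = {x}) (hdisj₁ : ∀ T' ∈ 𝒯, ∀ v ∈ T', v ∉ S₁)
    (S₂ : Finset V)
    (hacyc₂ : (G.induce (((T₂ : Set V))ᶜ \ (S₂ : Set V))).IsAcyclic)
    (hXS₂ : X \ S₂ = {x}) :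
    (G.induce ((S₂ : Set V))ᶜ).IsAcyclic := by
  have hxM : x ∈ M := hXM hxX
  have hxS₁ : x ∉ S₁ := by
    have : x ∈ X \ S₁ := hXS₁ ▸ Finset.mem_singleton_self x
    exact (Finset.mem_sdiff.mp this).2
  have hxS₂ : x ∉ S₂ := by
    have : x ∈ X \ S₂ := hXS₂ ▸ Finset.mem_singleton_self x
    exact (Finset.mem_sdiff.mp this).2
  intro a c hc
  by_cases hmeet : ∃ s ∈ c.support, (s : V) ∈ T₂
  · obtain ⟨s, hs, hsT₂⟩ := hmeet
    have hc' := hc.rotate hs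
    set c' := c.rotate _ hs with hc'def
    have hxT₂ : x ∉ T₂ := fun h => Finset.disjoint_left.mp (hTM T₂ hT₂) h hxM
    have hxT₁ : x ∉ T₁ := fun h => Finset.disjoint_left.mp (hTM T₁ hT₁) h hxM
    have H : ∀ y z : V, y ∈ T₂ → z ∈ ((S₂ : Set V))ᶜ → G.Adj y z → z ∈ T₂ ∨ z = x := by
      intro y z hy hz hadj
      rcases hclosed T₂ hT₂ y hy z hadj with hzM | hzT
      · have hzX : z ∈ X := by
          rw [← hnbhd T₂ hT₂]
          exact Finset.mem_filter.mpr ⟨hzM, y, hy, hadj.symm⟩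
        have : z ∈ X \ S₂ := Finset.mem_sdiff.mpr ⟨hzX, hz⟩
        exact Or.inr (Finset.mem_singleton.mp (hXS₂ ▸ this))
      · exact Or.inl hzT
    have hconf := cycleConfine hxT₂ H c' hc' hsT₂
    refine cycle_transfer c' hc' (fun t ht => ?_) hacyc₁
    rcases hconf t ht with h | h
    · exact ⟨fun h' => Finset.disjoint_left.mp (hdisj T₂ hT₂ T₁ hT₁ hne.symm) h h',
        hdisj₁ T₂ hT₂ _ h⟩
    · rw [h]
      exact ⟨hxT₁, hxS₁⟩
  · refine cycle_transfer c hc (fun t ht => ?_) hacyc₂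
    exact ⟨fun h => hmeet ⟨t, ht, h⟩, t.2⟩

end Helpers

/-- `S` is a feedback vertex set of `G`: removing `S` leaves an acyclic graph. -/
def IsFVS {V : Type*} (G : SimpleGraph V) (S : Set V) : Prop :=
  (G.induce Sᶜ).IsAcyclic

/-- The minimum size of a feedback vertex set of the subgraph of `G` induced on `A`. -/
noncomputable def minFVSOn {V : Type*} (G : SimpleGraph V) (A : Set V) : ℕ :=
  sInf {n : ℕ | ∃ S : Finset V, ↑S ⊆ A ∧ S.card = n ∧ (G.induce (A \ ↑S)).IsAcyclic}

/-- Let `M` be a feedback vertex set of `G`, `X ⊆ M` nonempty, and `𝒯` a family of at least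
`|X| + 2` pairwise disjoint connected vertex subsets of `G - M`, each the vertex set of a
connected component of `G - M`, all with neighborhood exactly `X` in `M`. Then some `T ∈ 𝒯`
can be removed without changing the minimum feedback vertex set size. -/
theorem stmt16 {V : Type*} [DecidableEq V] (G : SimpleGraph V) [DecidableRel G.Adj]
    (M : Finset V) (hM : IsFVS G ↑M)
    (X : Finset V) (hX : X ⊆ M) (hX1 : 1 ≤ X.card)
    (𝒯 : Finset (Finset V)) (hcard : X.card + 2 ≤ 𝒯.card)
    (hTM : ∀ T ∈ 𝒯, Disjoint T M)
    (hconn : ∀ T ∈ 𝒯, (G.induce (T : Set V)).Connected)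
    (hclosed : ∀ T ∈ 𝒯, ∀ v ∈ T, ∀ w : V, G.Adj v w → w ∈ M ∨ w ∈ T)
    (hdisj : ∀ T ∈ 𝒯, ∀ T' ∈ 𝒯, T ≠ T' → Disjoint T T')
    (hnbhd : ∀ T ∈ 𝒯, M.filter (fun x => ∃ v ∈ T, G.Adj x v) = X) :
    ∃ T ∈ 𝒯, minFVSOn G Set.univ = minFVSOn G (↑T)ᶜ := by
  classical
  have hM' : (G.induce ((M : Set V))ᶜ).IsAcyclic := hM
  obtain ⟨x0, hx0⟩ := Finset.card_pos.mp hX1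
  by_contra hcon
  push_neg at hcon
  set f := minFVSOn G Set.univ with hf_def
  -- univ set is nonempty (M is a witness)
  have hMuniv : f ∈ {n : ℕ | ∃ S : Finset V, ↑S ⊆ (Set.univ : Set V) ∧ S.card = n ∧
      (G.induce ((Set.univ : Set V) \ ↑S)).IsAcyclic} := by
    apply Nat.sInf_mem
    refine ⟨M.card, M, Set.subset_univ _, rfl, ?_⟩
    have : ((Set.univ : Set V) \ ↑M) = ((M : Set V))ᶜ := by
      rw [← Set.compl_eq_univ_diff]
    rw [this]; exact hM'
  have hf_le : ∀ W : Finset V, (G.induce ((W : Set V))ᶜ).IsAcyclic → f ≤ W.card := by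
    intro W hW
    apply Nat.sInf_le
    refine ⟨W, Set.subset_univ _, rfl, ?_⟩
    have : ((Set.univ : Set V) \ ↑W) = ((W : Set V))ᶜ := by
      rw [← Set.compl_eq_univ_diff]
    rw [this]; exact hW
  -- witnesses for each T
  have hwit : ∀ T ∈ 𝒯, ∃ S : Finset V, (S : Set V) ⊆ ((T : Set V))ᶜ ∧
      (G.induce (((T : Set V))ᶜ \ (S : Set V))).IsAcyclic ∧ S.card < f := by
    intro T hT
    have hMT : (M : Set V) ⊆ ((T : Set V))ᶜ := by
      intro v hv hvT
      exact Finset.disjoint_left.mp (hTM T hT) hvT hv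
    have hne : {n : ℕ | ∃ S : Finset V, ↑S ⊆ (((T : Set V))ᶜ : Set V) ∧ S.card = n ∧
        (G.induce ((((T : Set V))ᶜ : Set V) \ ↑S)).IsAcyclic}.Nonempty := by
      refine ⟨M.card, M, hMT, rfl, acyc_mono ?_ hM'⟩
      intro v hv
      exact hv.2
    obtain ⟨S, hS1, hS2, hS3⟩ := Nat.sInf_mem hne
    refine ⟨S, hS1, hS3, ?_⟩
    have h0 : S.card = minFVSOn G (↑T)ᶜ := hS2
    obtain ⟨S₀, _, hS₀card, hS₀ac⟩ := hMuniv
    have h1 : minFVSOn G (↑T)ᶜ ≤ (S₀ \ T).card := by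
      apply Nat.sInf_le
      refine ⟨S₀ \ T, ?_, rfl, ?_⟩
      · intro v hv hvT
        exact (Finset.mem_sdiff.mp hv).2 hvT
      · refine acyc_mono ?_ hS₀ac
        intro v hv
        obtain ⟨hv1, hv2⟩ := hv
        refine ⟨trivial, ?_⟩
        intro hvS₀
        exact hv2 (Finset.mem_coe.mpr (Finset.mem_sdiff.mpr
          ⟨hvS₀, fun h => hv1 (Finset.mem_coe.mpr h)⟩))
    have h2 : (S₀ \ T).card ≤ S₀.card := Finset.card_le_card Finset.sdiff_subset
    have h3 : minFVSOn G (↑T)ᶜ ≠ f := Ne.symm (hcon T hT)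
    omega
  -- apply key to each T, get the bad-case data
  have key3 : ∀ T ∈ 𝒯, ∃ p : V × Finset V, p.1 ∈ X ∧
      (G.induce (((T : Set V))ᶜ \ (p.2 : Set V))).IsAcyclic ∧
      X \ p.2 = {p.1} ∧ (∀ T' ∈ 𝒯, ∀ v ∈ T', v ∉ p.2) ∧ p.2.card < f := by
    intro T hT
    obtain ⟨S, hS1, hS2, hS3⟩ := hwit T hT
    obtain ⟨x, hx1, hx2, hx3⟩ := key M X 𝒯 hM' hX hX1 hcard hTM hconn hclosed hdisj hnbhd
      f hf_le T hT S hS1 hS2 hS3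
    exact ⟨(x, S), hx1, hS2, hx2, hx3, hS3⟩
  -- pigeonhole
  set F : Finset V → V := fun T => if h : T ∈ 𝒯 then (key3 T h).choose.1 else x0 with hF_def
  have hFmaps : ∀ T ∈ 𝒯, F T ∈ X := by
    intro T hT
    simp only [hF_def, dif_pos hT]
    exact (key3 T hT).choose_spec.1
  obtain ⟨T₁, hT₁, T₂, hT₂, hne, hFeq⟩ :=
    Finset.exists_ne_map_eq_of_card_lt_of_maps_to (by omega : X.card < 𝒯.card) hFmaps
  obtain ⟨h1X, hac₁, hXS₁, hdisj₁, hcard₁⟩ := (key3 T₁ hT₁).choose_spec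
  obtain ⟨h2X, hac₂, hXS₂, hdisj₂, hcard₂⟩ := (key3 T₂ hT₂).choose_spec
  have hFeq' : (key3 T₁ hT₁).choose.1 = (key3 T₂ hT₂).choose.1 := by
    simpa only [hF_def, dif_pos hT₁, dif_pos hT₂] using hFeq
  rw [hFeq'] at hXS₁
  -- final contradiction
  have hacS₂ := final M X 𝒯 hM' hX hTM hclosed hdisj hnbhd T₁ hT₁ T₂ hT₂ hne h2X
    (key3 T₁ hT₁).choose.2 hac₁ hXS₁ hdisj₁ (key3 T₂ hT₂).choose.2 hac₂ hXS₂
  have hflarge := hf_le _ hacS₂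
  omega
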